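/- Let h, k, c, T > 0. Then the total radiant flux of the Planck distribution satisfies 4π · ∫₀^∞ (2hν³/c²)·1/(exp(hν/(kT)) − 1) dν = a c T⁴, where a = 8π⁵k⁴/(15h³c³) is the radiation constant. (The factor 4π is the measure of the unit sphere S², over which the isotropic Planck distribution is constant.) -/

import Mathlib

open Real MeasureTheory

section PlanckAux
open Set

private lemma planck_term_integral (n : ℕ) :
    ∫ t in Ioi (0:ℝ), t ^ 3 * Real.exp (-(((n:ℝ)+1) * t)) = 6 / ((n:ℝ)+1) ^ 4 := by
  have hr : (0:ℝ) < (n:ℝ) + 1 := by positivity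
  have := Real.integral_rpow_mul_exp_neg_mul_Ioi (a := 4) (r := (n:ℝ)+1) (by norm_num) hr
  rw [show Real.Gamma 4 = 6 by
    rw [show (4:ℝ) = (3:ℕ) + 1 by norm_num, Real.Gamma_nat_eq_factorial]; norm_num [Nat.factorial]]
    at this
  rw [show (6:ℝ) / ((n:ℝ)+1)^4 = (1/((n:ℝ)+1))^(4:ℝ) * 6 by
    rw [show (4:ℝ) = ((4:ℕ):ℝ) by norm_num, Real.rpow_natCast]; field_simp]
  rw [← this]
  refine setIntegral_congr_fun measurableSet_Ioi (fun t ht ↦ ?_)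
  rw [show (4:ℝ) - 1 = ((3:ℕ):ℝ) by norm_num, Real.rpow_natCast]

private lemma planck_term_integrable (n : ℕ) :
    IntegrableOn (fun t : ℝ => t ^ 3 * Real.exp (-(((n:ℝ)+1) * t))) (Ioi 0) := by
  have hr : (0:ℝ) < (n:ℝ) + 1 := by positivity
  have := integrableOn_rpow_mul_exp_neg_mul_rpow (p := 1) (s := 3) (b := (n:ℝ)+1)
    (by norm_num) (by norm_num) hr
  refine this.congr_fun (fun t ht ↦ ?_) measurableSet_Ioi
  beta_reduce
  rw [Real.rpow_one, show (3:ℝ) = ((3:ℕ):ℝ) by norm_num, Real.rpow_natCast, neg_mul]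

private lemma planck_key :
    ∫ t in Ioi (0:ℝ), t ^ 3 * (1 / (Real.exp t - 1)) = π ^ 4 / 15 := by
  have hsum : ∀ t ∈ Ioi (0:ℝ),
      HasSum (fun n : ℕ => t ^ 3 * Real.exp (-(((n:ℝ)+1) * t)))
        (t ^ 3 * (1 / (Real.exp t - 1))) := by
    intro t ht
    have htpos : (0:ℝ) < t := ht
    have h0 : Real.exp (-t) < 1 := Real.exp_lt_one_iff.mpr (by linarith)
    have h1 : (0:ℝ) ≤ Real.exp (-t) := (Real.exp_pos _).le
    have he : (0:ℝ) < Real.exp t - 1 := by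
      have : (1:ℝ) < Real.exp t := by
        rw [← Real.exp_zero]; exact Real.exp_lt_exp.mpr htpos
      linarith
    have hg := (hasSum_geometric_of_lt_one h1 h0).mul_left (t ^ 3 * Real.exp (-t))
    convert hg using 1
    · rfl
    · funext n
      rw [mul_assoc, ← Real.exp_nat_mul, ← Real.exp_add]
      ring_nf
    · have hne : Real.exp t ≠ 0 := (Real.exp_pos t).ne'
      rw [Real.exp_neg]
      field_simp
  have hnormval : ∀ n : ℕ, (∫ t in Ioi (0:ℝ), ‖t ^ 3 * Real.exp (-(((n:ℝ)+1) * t))‖)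
      = 6 / ((n:ℝ)+1) ^ 4 := by
    intro n
    rw [← planck_term_integral n]
    refine setIntegral_congr_fun measurableSet_Ioi (fun t ht ↦ ?_)
    have : (0:ℝ) < t := ht
    rw [norm_mul, Real.norm_eq_abs, Real.norm_eq_abs, abs_of_nonneg (by positivity),
      Real.abs_exp]
  have h4 : Summable (fun n : ℕ => 1 / ((n:ℝ)) ^ 4) :=
    Real.summable_one_div_nat_pow.mpr (by norm_num)
  have hsummable : Summable fun n : ℕ => 6 / ((n:ℝ)+1) ^ 4 :=
    (((summable_nat_add_iff 1).mpr h4).mul_left 6).congr (fun n => by push_cast; ring)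
  have hnorm : Summable fun n : ℕ => ∫ t in Ioi (0:ℝ), ‖t ^ 3 * Real.exp (-(((n:ℝ)+1) * t))‖ := by
    rw [funext hnormval]; exact hsummable
  have hS := hasSum_integral_of_summable_integral_norm
    (μ := volume.restrict (Ioi 0)) planck_term_integrable hnorm
  have htsum_eq : ∫ t in Ioi (0:ℝ), (∑' n : ℕ, t ^ 3 * Real.exp (-(((n:ℝ)+1) * t)))
      = ∫ t in Ioi (0:ℝ), t ^ 3 * (1 / (Real.exp t - 1)) := by
    refine setIntegral_congr_fun measurableSet_Ioi (fun t ht ↦ ?_)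
    exact (hsum t ht).tsum_eq
  rw [htsum_eq] at hS
  simp only [planck_term_integral] at hS
  have hz := (hasSum_nat_add_iff' (f := fun n : ℕ => 1/((n:ℝ))^4) 1).mpr hasSum_zeta_four
  simp only [Finset.range_one, Finset.sum_singleton, Nat.cast_zero] at hz
  norm_num at hz
  have hz6 := hz.mul_left 6
  have heq : (fun n : ℕ => 6 * (((n:ℝ)+1) ^ 4)⁻¹) = fun n : ℕ => (6:ℝ) / ((n:ℝ)+1) ^ 4 := by
    funext n; rw [div_eq_mul_inv]
  rw [heq] at hz6
  have hval := hS.unique hz6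
  rw [hval]; ring

end PlanckAux

/-- Integrating the Planck black-body distribution `B(ν,T) = (2hν³/c²)/(exp(hν/(kT)) − 1)`
over all frequencies `ν ∈ (0,∞)` and over the unit sphere (measure `4π`) gives the
radiant flux `φ = a c T⁴`, with radiation constant `a = 8π⁵k⁴/(15h³c³)`. -/
theorem planck_integral_radiant_flux (h k c T : ℝ)
    (hh : 0 < h) (hk : 0 < k) (hc : 0 < c) (hT : 0 < T) :
    4 * π * ∫ ν in Set.Ioi (0 : ℝ),
        (2 * h * ν ^ 3 / c ^ 2) * (1 / (Real.exp (h * ν / (k * T)) - 1)) =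
      (8 * π ^ 5 * k ^ 4 / (15 * h ^ 3 * c ^ 3)) * c * T ^ 4 := by
  set b : ℝ := h / (k * T) with hb_def
  have hb : 0 < b := by positivity
  set g : ℝ → ℝ := fun y => (2 * h / c ^ 2 * b⁻¹ ^ 3) * (y ^ 3 * (1 / (Real.exp y - 1)))
    with hg_def
  have hcomp : ∀ ν : ℝ, (2 * h * ν ^ 3 / c ^ 2) * (1 / (Real.exp (h * ν / (k * T)) - 1))
      = g (b * ν) := by
    intro ν
    have : h * ν / (k * T) = b * ν := by rw [hb_def]; ring
    rw [this, hg_def]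
    have hbne : b ≠ 0 := hb.ne'
    have hb3 : b⁻¹ ^ 3 * b ^ 3 = 1 := by
      rw [← mul_pow, inv_mul_cancel₀ hbne, one_pow]
    dsimp only
    rw [mul_pow]
    calc 2 * h * ν ^ 3 / c ^ 2 * (1 / (Real.exp (b * ν) - 1))
        = 2 * h / c ^ 2 * (b⁻¹ ^ 3 * b ^ 3) * (ν ^ 3 * (1 / (Real.exp (b * ν) - 1))) := by
          rw [hb3]; ring
      _ = 2 * h / c ^ 2 * b⁻¹ ^ 3 * (b ^ 3 * ν ^ 3 * (1 / (Real.exp (b * ν) - 1))) := by ring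
  calc 4 * π * ∫ ν in Set.Ioi (0 : ℝ),
        (2 * h * ν ^ 3 / c ^ 2) * (1 / (Real.exp (h * ν / (k * T)) - 1))
      = 4 * π * ∫ ν in Set.Ioi (0 : ℝ), g (b * ν) := by
        congr 1
        exact setIntegral_congr_fun measurableSet_Ioi (fun ν _ ↦ hcomp ν)
    _ = 4 * π * (b⁻¹ • ∫ y in Set.Ioi (b * 0 : ℝ), g y) := by
        rw [MeasureTheory.integral_comp_mul_left_Ioi g 0 hb]
    _ = 4 * π * (b⁻¹ * ((2 * h / c ^ 2 * b⁻¹ ^ 3) * (π ^ 4 / 15))) := by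
        rw [mul_zero, smul_eq_mul, hg_def]
        rw [MeasureTheory.integral_const_mul, planck_key]
    _ = (8 * π ^ 5 * k ^ 4 / (15 * h ^ 3 * c ^ 3)) * c * T ^ 4 := by
        rw [hb_def]
        field_simp
        ring
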